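/- Let f and g be nonconstant meromorphic functions on ℂ having common poles, let k and n be positive integers with n>k, and let α be a nonzero meromorphic function such that (fⁿ)^{(k)}·(gⁿ)^{(k)} ≡ α² on ℂ. Then f=0 ↦ α=0, g=0 ↦ α=0, f=∞ ↦ α=∞ and g=∞ ↦ α=∞; that is, every zero of f (and of g) of multiplicity p is a zero of α of multiplicity at least p, and every pole of f (and of g) of multiplicity q is a pole of α of multiplicity at least q. -/

import Mathlib

open Complex MeasureTheory Filter Topology Polynomial
open scoped ENNReal Classical

noncomputable section

namespace Nevanlinna

/-- The positive part of the logarithm, `log⁺`. -/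
def logp (x : ℝ) : ℝ := max 0 (Real.log x)

/-- `f` is meromorphic on all of `ℂ`. -/
def Mero (f : ℂ → ℂ) : Prop := ∀ z : ℂ, MeromorphicAt f z

/-- `f` is nonconstant. -/
def Nonconst (f : ℂ → ℂ) : Prop := ¬ ∃ c : ℂ, ∀ z, f z = c

/-- The divisor of a meromorphic function: the order of the zero (positive) or pole
(negative) at `z`; junk value `0` at points where `f` is not meromorphic or vanishes
identically near `z`. -/
def div (f : ℂ → ℂ) (z : ℂ) : ℤ :=
  if h : MeromorphicAt f z then ((meromorphicOrderAt f z).untopD 0) else 0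

/-- Multiplicity of `z` as an `a`-point of `f`. -/
def zmult (f : ℂ → ℂ) (a : ℂ) (z : ℂ) : ℕ := (div (fun w => f w - a) z).toNat

/-- Multiplicity of `z` as a pole of `f`. -/
def pmult (f : ℂ → ℂ) (z : ℂ) : ℕ := (-(div f z)).toNat

/-- `z` is a pole of `f`. -/
def IsPole (f : ℂ → ℂ) (z : ℂ) : Prop := div f z < 0

/-- Unintegrated counting function attached to a multiplicity function `m`. -/
def ncnt (m : ℂ → ℕ) (t : ℝ) : ℝ := ∑ᶠ z ∈ {z : ℂ | ‖z‖ ≤ t}, (m z : ℝ)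

/-- Integrated (Nevanlinna) counting function attached to a multiplicity function `m`. -/
def Ncnt (m : ℂ → ℕ) (r : ℝ) : ℝ :=
  (∫ t in (0:ℝ)..r, (ncnt m t - ncnt m 0) / t) + ncnt m 0 * Real.log r

/-- `N(r, a; f)`, counted with multiplicity. -/
def Nzero (f : ℂ → ℂ) (a : ℂ) (r : ℝ) : ℝ := Ncnt (zmult f a) r

/-- `N(r, f) = N(r, ∞; f)`, counted with multiplicity. -/
def Npole (f : ℂ → ℂ) (r : ℝ) : ℝ := Ncnt (pmult f) r

/-- `N̄(r, a; f)`, multiplicities ignored. -/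
def Nzerobar (f : ℂ → ℂ) (a : ℂ) (r : ℝ) : ℝ := Ncnt (fun z => min 1 (zmult f a z)) r

/-- `N̄(r, f)`, multiplicities ignored. -/
def Npolebar (f : ℂ → ℂ) (r : ℝ) : ℝ := Ncnt (fun z => min 1 (pmult f z)) r

/-- The Nevanlinna proximity function `m(r, f)`. -/
def prox (f : ℂ → ℂ) (r : ℝ) : ℝ :=
  (2 * Real.pi)⁻¹ *
    ∫ θ in (0:ℝ)..(2 * Real.pi), logp ‖f (r * Complex.exp (θ * Complex.I))‖

/-- The Nevanlinna characteristic `T(r, f)`. -/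
def T (f : ℂ → ℂ) (r : ℝ) : ℝ := prox f r + Npole f r

/-- The growth exponent `limsup log⁺ N(r) / log r` of a real function. -/
def growthExp (N : ℝ → ℝ) : ℝ≥0∞ :=
  Filter.limsup (fun r => ENNReal.ofReal (logp (N r) / Real.log r)) Filter.atTop

/-- The order `ρ(f)`. -/
def rho (f : ℂ → ℂ) : ℝ≥0∞ := growthExp (T f)

/-- The hyper-order `ρ₂(f)`. -/
def rho2 (f : ℂ → ℂ) : ℝ≥0∞ := growthExp (fun r => logp (T f r))

/-- The lower order `μ(f)`. -/
def mu (f : ℂ → ℂ) : ℝ≥0∞ :=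
  Filter.liminf (fun r => ENNReal.ofReal (logp (T f r) / Real.log r)) Filter.atTop

/-- `ρ₁(0; f)`, the exponent of convergence of the zeros of `f`. -/
def rho1Zero (f : ℂ → ℂ) : ℝ≥0∞ := growthExp (Nzero f 0)

/-- `ρ₁(∞; f)`, the exponent of convergence of the poles of `f`. -/
def rho1Pole (f : ℂ → ℂ) : ℝ≥0∞ := growthExp (Npole f)

/-- `ρ̄₁(0; f)`. -/
def rho1barZero (f : ℂ → ℂ) : ℝ≥0∞ := growthExp (Nzerobar f 0)

/-- `ρ̄₁(∞; f)`. -/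
def rho1barPole (f : ℂ → ℂ) : ℝ≥0∞ := growthExp (Npolebar f)

/-- `N = S(r, f)`: `N(r) = o(T(r, f))` as `r → ∞` outside a set of finite linear measure. -/
def SmallQty (N : ℝ → ℝ) (f : ℂ → ℂ) : Prop :=
  ∃ E : Set ℝ, volume E ≠ ⊤ ∧
    ∀ ε : ℝ, 0 < ε → ∀ᶠ r in atTop, r ∉ E → N r ≤ ε * T f r

/-- `a` is a small function of `f`: `T(r, a) = S(r, f)`. -/
def SmallFn (a f : ℂ → ℂ) : Prop := SmallQty (T a) f

/-- `0` is a Borel exceptional value of `f`. -/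
def BorelZero (f : ℂ → ℂ) : Prop :=
  (0 < rho f ∧ rho1Zero f < rho f) ∨
  (rho f = 0 ∧ (fun r => Nzero f 0 r) =O[atTop] Real.log)

/-- `∞` is a Borel exceptional value of `f`. -/
def BorelPole (f : ℂ → ℂ) : Prop :=
  (0 < rho f ∧ rho1Pole f < rho f) ∨
  (rho f = 0 ∧ (fun r => Npole f r) =O[atTop] Real.log)

/-- A nonzero meromorphic function on `ℂ`. -/
def NonzeroMero (f : ℂ → ℂ) : Prop := Mero f ∧ ∃ z, AnalyticAt ℂ f z ∧ f z ≠ 0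

/-- `f` and `g` have common poles. -/
def CommonPoles (f g : ℂ → ℂ) : Prop := ∀ z, IsPole f z ↔ IsPole g z

/-- `f = 0 ↦ α = 0`: every zero of `f` of multiplicity `p` is a zero of `α` of
multiplicity at least `p`. -/
def ZeroMapsTo (f α : ℂ → ℂ) : Prop := ∀ z, 0 < div f z → div f z ≤ div α z

/-- `f = ∞ ↦ α = ∞`: every pole of `f` of multiplicity `p` is a pole of `α` of
multiplicity at least `p`. -/
def PoleMapsTo (f α : ℂ → ℂ) : Prop := ∀ z, div f z < 0 → div α z ≤ div f z

/-- The differential equation `(fⁿ)⁽ᵏ⁾ (gⁿ)⁽ᵏ⁾ ≡ α²`, as an identity at all points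
where `f` and `g` are analytic. -/
def MainEq (f g α : ℂ → ℂ) (n k : ℕ) : Prop :=
  ∀ z, AnalyticAt ℂ f z → AnalyticAt ℂ g z →
    iteratedDeriv k (fun w => f w ^ n) z * iteratedDeriv k (fun w => g w ^ n) z = α z ^ 2

/-- `f` is a polynomial function. -/
def IsPoly (f : ℂ → ℂ) : Prop := ∃ p : Polynomial ℂ, ∀ z, f z = p.eval z

/-- `f` is a transcendental entire function. -/
def TransEntire (f : ℂ → ℂ) : Prop := Differentiable ℂ f ∧ ¬ IsPoly f

/-- `R` is a (nonzero) rational function of degree `d = deg P − deg Q` for a coprime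
representation `R = P/Q`. -/
def RatWithDeg (R : ℂ → ℂ) (d : ℤ) : Prop :=
  ∃ p q : Polynomial ℂ, p ≠ 0 ∧ q ≠ 0 ∧ IsCoprime p q ∧
    (∀ z, q.eval z ≠ 0 → R z = p.eval z / q.eval z) ∧
    d = (p.natDegree : ℤ) - (q.natDegree : ℤ)

/-- `R` is a nonzero rational function. -/
def IsRat (R : ℂ → ℂ) : Prop := ∃ d : ℤ, RatWithDeg R d

/-- `R` is a rational function (possibly zero). -/
def IsRatFn (R : ℂ → ℂ) : Prop :=
  ∃ p q : Polynomial ℂ, q ≠ 0 ∧ ∀ z, q.eval z ≠ 0 → R z = p.eval z / q.eval z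

end Nevanlinna

namespace Nevanlinna

/-- Compatibility: the order of a meromorphic function. -/
def _root_.MeromorphicAt.order {f : ℂ → ℂ} {x : ℂ} (_hf : MeromorphicAt f x) : WithTop ℤ :=
  meromorphicOrderAt f x

lemma _root_.MeromorphicAt.order_eq_top_iff {f : ℂ → ℂ} {x : ℂ} (hf : MeromorphicAt f x) :
    hf.order = ⊤ ↔ ∀ᶠ z in 𝓝[≠] x, f z = 0 :=
  meromorphicOrderAt_eq_top_iff

lemma _root_.MeromorphicAt.order_eq_int_iff {f : ℂ → ℂ} {x : ℂ} (hf : MeromorphicAt f x)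
    (n : ℤ) : hf.order = n ↔
      ∃ g : ℂ → ℂ, AnalyticAt ℂ g x ∧ g x ≠ 0 ∧ ∀ᶠ z in 𝓝[≠] x, f z = (z - x) ^ n • g z :=
  meromorphicOrderAt_eq_int_iff hf

lemma analyticAt_deriv {f : ℂ → ℂ} {x : ℂ} (h : AnalyticAt ℂ f x) :
    AnalyticAt ℂ (deriv f) x := by
  have h2 : AnalyticOnNhd ℂ f {x} := by
    intro y hy
    rw [Set.mem_singleton_iff] at hy
    subst hy; exact h
  exact h2.deriv x rfl

lemma order_congr' {f g : ℂ → ℂ} {x : ℂ} (hf : MeromorphicAt f x) (hg : MeromorphicAt g x)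
    (h : f =ᶠ[𝓝[≠] x] g) : hf.order = hg.order := by
  rcases eq_or_ne hf.order ⊤ with ho | ho
  · rw [ho, eq_comm, hg.order_eq_top_iff]
    rw [hf.order_eq_top_iff] at ho
    filter_upwards [ho, h] with z h1 h2
    rw [← h2, h1]
  · obtain ⟨m, hm⟩ := WithTop.ne_top_iff_exists.mp ho
    obtain ⟨ψ, hψ, hψ0, hrep⟩ := (hf.order_eq_int_iff m).mp hm.symm
    rw [← hm, eq_comm, hg.order_eq_int_iff]
    exact ⟨ψ, hψ, hψ0, by filter_upwards [hrep, h] with z h1 h2; rw [← h2, h1]⟩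

lemma order_mul_coe {f g : ℂ → ℂ} {x : ℂ} (hf : MeromorphicAt f x) (hg : MeromorphicAt g x)
    {a b : ℤ} (ha : hf.order = a) (hb : hg.order = b)
    (hm : MeromorphicAt (fun z => f z * g z) x) : hm.order = (a + b : ℤ) := by
  obtain ⟨φ, hφ, hφ0, hf'⟩ := (hf.order_eq_int_iff a).mp ha
  obtain ⟨ψ, hψ, hψ0, hg'⟩ := (hg.order_eq_int_iff b).mp hb
  rw [hm.order_eq_int_iff]
  refine ⟨fun z => φ z * ψ z, hφ.mul hψ, mul_ne_zero hφ0 hψ0, ?_⟩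
  filter_upwards [hf', hg', self_mem_nhdsWithin] with z h1 h2 hz
  have hzx : (z - x) ≠ 0 := sub_ne_zero.mpr hz
  simp only [smul_eq_mul] at *
  rw [h1, h2, zpow_add₀ hzx]; ring

lemma order_pow_coe {f : ℂ → ℂ} {x : ℂ} (hf : MeromorphicAt f x) {a : ℤ} (n : ℕ)
    (ha : hf.order = a) (h2 : MeromorphicAt (fun z => f z ^ n) x) :
    h2.order = (a * n : ℤ) := by
  obtain ⟨φ, hφ, hφ0, hf'⟩ := (hf.order_eq_int_iff a).mp ha
  rw [h2.order_eq_int_iff]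
  refine ⟨fun z => φ z ^ n, hφ.pow n, pow_ne_zero n hφ0, ?_⟩
  filter_upwards [hf', self_mem_nhdsWithin] with z h1 hz
  have hzx : (z - x) ≠ 0 := sub_ne_zero.mpr hz
  simp only [smul_eq_mul] at *
  rw [h1, mul_pow, ← zpow_natCast ((z - x) ^ a), ← zpow_mul]

lemma eventually_deriv_congr {f F : ℂ → ℂ} {x : ℂ} (h : f =ᶠ[𝓝[≠] x] F) :
    deriv f =ᶠ[𝓝[≠] x] deriv F := by
  obtain ⟨U, hUo, hxU, hU⟩ := mem_nhdsWithin.mp h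
  have hmem : U ∩ {x}ᶜ ∈ 𝓝[≠] x := mem_nhdsWithin.mpr ⟨U, hUo, hxU, subset_rfl⟩
  filter_upwards [hmem] with z hz
  have hopen : IsOpen (U ∩ {x}ᶜ) := hUo.inter isOpen_compl_singleton
  have : f =ᶠ[𝓝 z] F := eventually_of_mem (hopen.mem_nhds hz) (fun w hw => hU hw)
  exact this.deriv_eq

lemma deriv_rep {f g : ℂ → ℂ} {x : ℂ} {m : ℤ} (hg : AnalyticAt ℂ g x)
    (h : ∀ᶠ z in 𝓝[≠] x, f z = (z - x) ^ m * g z) :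
    ∀ᶠ z in 𝓝[≠] x, deriv f z =
      (z - x) ^ (m - 1) * ((m : ℂ) * g z + (z - x) * deriv g z) := by
  have h1 : deriv f =ᶠ[𝓝[≠] x] deriv (fun z => (z - x) ^ m * g z) :=
    eventually_deriv_congr h
  filter_upwards [h1, hg.eventually_analyticAt.filter_mono nhdsWithin_le_nhds,
    self_mem_nhdsWithin] with z h1z hgz hz
  have hzx : z - x ≠ 0 := sub_ne_zero.mpr hz
  have d1 : HasDerivAt (fun w : ℂ => (w - x) ^ m) ((m : ℂ) * (z - x) ^ (m - 1)) z := by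
    have := (hasDerivAt_zpow m (z - x) (Or.inl hzx)).comp z ((hasDerivAt_id z).sub_const x)
    exact this.congr_deriv (mul_one _)
  have d2 : HasDerivAt g (deriv g z) z := hgz.differentiableAt.hasDerivAt
  have d3 : HasDerivAt (fun w => (w - x) ^ m * g w) _ z := d1.mul d2
  rw [h1z, d3.deriv]
  have hsplit : (z - x) ^ m = (z - x) ^ (m - 1) * (z - x) := by
    have e : m - 1 + 1 = m := by ring
    rw [← e, zpow_add_one₀ hzx]; ring_nf
  rw [hsplit]; ring

lemma mero_deriv {f : ℂ → ℂ} {x : ℂ} (hf : MeromorphicAt f x) :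
    MeromorphicAt (deriv f) x := by
  obtain ⟨m, g, hg, h⟩ := MeromorphicAt.iff_eventuallyEq_zpow_smul_analyticAt.mp hf
  simp only [smul_eq_mul] at h
  have hrep := deriv_rep hg h
  have hm : MeromorphicAt
      (fun z => (z - x) ^ (m - 1) * ((m : ℂ) * g z + (z - x) * deriv g z)) x := by
    apply MeromorphicAt.mul
    · exact ((MeromorphicAt.id x).sub (MeromorphicAt.const _ x)).zpow _
    · exact ((analyticAt_const.mul hg).add
        ((analyticAt_id.sub analyticAt_const).mul (analyticAt_deriv hg))).meromorphicAt
  exact hm.congr (EventuallyEq.symm hrep)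

lemma order_deriv {f : ℂ → ℂ} {x : ℂ} {m : ℤ} (hf : MeromorphicAt f x)
    (hd : MeromorphicAt (deriv f) x) (hm : hf.order = m) (hm0 : m ≠ 0) :
    hd.order = (m - 1 : ℤ) := by
  obtain ⟨g, hg, hg0, h⟩ := (hf.order_eq_int_iff m).mp hm
  simp only [smul_eq_mul] at h
  rw [hd.order_eq_int_iff]
  refine ⟨fun z => (m : ℂ) * g z + (z - x) * deriv g z,
    (analyticAt_const.mul hg).add
      ((analyticAt_id.sub analyticAt_const).mul (analyticAt_deriv hg)), ?_, ?_⟩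
  · simp only [sub_self, zero_mul, add_zero]
    exact mul_ne_zero (Int.cast_ne_zero.mpr hm0) hg0
  · simpa [smul_eq_mul] using deriv_rep hg h

lemma order_top_deriv {f : ℂ → ℂ} {x : ℂ} (hf : MeromorphicAt f x)
    (hd : MeromorphicAt (deriv f) x) (hm : hf.order = ⊤) : hd.order = ⊤ := by
  rw [hf.order_eq_top_iff] at hm
  rw [hd.order_eq_top_iff]
  have : f =ᶠ[𝓝[≠] x] (fun _ => (0 : ℂ)) := hm
  have h2 := eventually_deriv_congr this
  filter_upwards [h2] with z hz
  rw [hz, deriv_const]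

lemma order_nonneg_iff {f : ℂ → ℂ} {x : ℂ} (hf : MeromorphicAt f x) :
    0 ≤ hf.order ↔ ∃ φ, AnalyticAt ℂ φ x ∧ f =ᶠ[𝓝[≠] x] φ := by
  constructor
  · intro h
    rcases eq_or_ne hf.order ⊤ with ho | ho
    · exact ⟨fun _ => 0, analyticAt_const, hf.order_eq_top_iff.mp ho⟩
    · obtain ⟨m, hm⟩ := WithTop.ne_top_iff_exists.mp ho
      have hm0 : 0 ≤ m := by
        rw [← hm] at h; exact_mod_cast h
      obtain ⟨g, hg, hg0, hrep⟩ := (hf.order_eq_int_iff m).mp hm.symm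
      refine ⟨fun z => (z - x) ^ m.toNat * g z,
        ((analyticAt_id.sub analyticAt_const).pow _).mul hg, ?_⟩
      filter_upwards [hrep] with z hz
      rw [hz]
      simp only [smul_eq_mul]
      rw [← zpow_natCast (z - x) m.toNat, Int.toNat_of_nonneg hm0]
  · rintro ⟨φ, hφ, h⟩
    rw [order_congr' hf hφ.meromorphicAt h]
    exact hφ.meromorphicOrderAt_nonneg

lemma order_nonneg_deriv {f : ℂ → ℂ} {x : ℂ} (hf : MeromorphicAt f x)
    (hd : MeromorphicAt (deriv f) x) (h : 0 ≤ hf.order) : 0 ≤ hd.order := by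
  obtain ⟨φ, hφ, hfφ⟩ := (order_nonneg_iff hf).mp h
  exact (order_nonneg_iff hd).mpr ⟨deriv φ, analyticAt_deriv hφ, eventually_deriv_congr hfφ⟩

lemma mero_iteratedDeriv {f : ℂ → ℂ} {x : ℂ} (hf : MeromorphicAt f x) (k : ℕ) :
    MeromorphicAt (iteratedDeriv k f) x := by
  induction k with
  | zero => rw [iteratedDeriv_zero]; exact hf
  | succ k ih => rw [iteratedDeriv_succ]; exact mero_deriv ih

lemma order_iteratedDeriv {f : ℂ → ℂ} {x : ℂ} {m : ℤ} (hf : MeromorphicAt f x)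
    (hm : hf.order = m) (k : ℕ) (hk : ∀ j : ℕ, j < k → m ≠ (j : ℤ))
    (hd : MeromorphicAt (iteratedDeriv k f) x) : hd.order = (m - k : ℤ) := by
  induction k with
  | zero =>
      have := order_congr' hd hf (EventuallyEq.of_eq iteratedDeriv_zero)
      rw [this, hm]; norm_num
  | succ k ih =>
      have hdk : MeromorphicAt (iteratedDeriv k f) x := mero_iteratedDeriv hf k
      have h1 : hdk.order = (m - k : ℤ) := ih (fun j hj => hk j (Nat.lt_succ_of_lt hj)) hdk
      have h2 : MeromorphicAt (deriv (iteratedDeriv k f)) x := mero_deriv hdk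
      have h3 : h2.order = (m - k - 1 : ℤ) := by
        apply order_deriv hdk h2 h1
        have := hk k (Nat.lt_succ_self k)
        omega
      have h4 := order_congr' hd h2 (EventuallyEq.of_eq iteratedDeriv_succ)
      rw [h4, h3]
      congr 1
      push_cast; ring

lemma order_nonneg_iteratedDeriv {f : ℂ → ℂ} {x : ℂ} (hf : MeromorphicAt f x)
    (h : 0 ≤ hf.order) (k : ℕ) (hd : MeromorphicAt (iteratedDeriv k f) x) :
    0 ≤ hd.order := by
  induction k with
  | zero =>
      rw [order_congr' hd hf (EventuallyEq.of_eq iteratedDeriv_zero)]; exact h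
  | succ k ih =>
      have hdk : MeromorphicAt (iteratedDeriv k f) x := mero_iteratedDeriv hf k
      have h2 : MeromorphicAt (deriv (iteratedDeriv k f)) x := mero_deriv hdk
      rw [order_congr' hd h2 (EventuallyEq.of_eq iteratedDeriv_succ)]
      exact order_nonneg_deriv hdk h2 (ih hdk)

lemma order_top_iteratedDeriv {f : ℂ → ℂ} {x : ℂ} (hf : MeromorphicAt f x)
    (h : hf.order = ⊤) (k : ℕ) (hd : MeromorphicAt (iteratedDeriv k f) x) :
    hd.order = ⊤ := by
  induction k with
  | zero =>
      rw [order_congr' hd hf (EventuallyEq.of_eq iteratedDeriv_zero)]; exact h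
  | succ k ih =>
      have hdk : MeromorphicAt (iteratedDeriv k f) x := mero_iteratedDeriv hf k
      have h2 : MeromorphicAt (deriv (iteratedDeriv k f)) x := mero_deriv hdk
      rw [order_congr' hd h2 (EventuallyEq.of_eq iteratedDeriv_succ)]
      exact order_top_deriv hdk h2 (ih hdk)




lemma order_top_global {F : ℂ → ℂ} (hF : ∀ z : ℂ, MeromorphicAt F z) {z₀ : ℂ}
    (h : (hF z₀).order = ⊤) (z : ℂ) : (hF z).order = ⊤ := by
  set S : Set ℂ := {w | (hF w).order = ⊤} with hSdef
  have hopen : IsOpen S := by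
    rw [isOpen_iff_mem_nhds]
    intro w hw
    have hw' : ∀ᶠ u in 𝓝[≠] w, F u = 0 := (hF w).order_eq_top_iff.mp hw
    obtain ⟨U, hUo, hwU, hU⟩ := mem_nhdsWithin.mp hw'
    apply Filter.mem_of_superset (hUo.mem_nhds hwU)
    intro v hv
    show (hF v).order = ⊤
    rw [(hF v).order_eq_top_iff]
    rcases eq_or_ne v w with rfl | hvw
    · exact hw'
    · have hmem : U ∩ {w}ᶜ ∈ 𝓝 v :=
        (hUo.inter isOpen_compl_singleton).mem_nhds ⟨hv, hvw⟩
      exact (eventually_of_mem hmem (fun u hu => hU hu)).filter_mono nhdsWithin_le_nhds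
  have hclosed : IsClosed S := by
    rw [← isOpen_compl_iff, isOpen_iff_mem_nhds]
    intro w hw
    have hw' : (hF w).order ≠ ⊤ := hw
    obtain ⟨m, hm⟩ := WithTop.ne_top_iff_exists.mp hw'
    obtain ⟨g, hg, hg0, hrep⟩ := ((hF w).order_eq_int_iff m).mp hm.symm
    simp only [smul_eq_mul] at hrep
    have hgne : ∀ᶠ u in 𝓝[≠] w, g u ≠ 0 :=
      (hg.continuousAt.eventually_ne hg0).filter_mono nhdsWithin_le_nhds
    obtain ⟨U, hUo, hwU, hU⟩ := mem_nhdsWithin.mp (hrep.and hgne)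
    apply Filter.mem_of_superset (hUo.mem_nhds hwU)
    intro v hv
    rcases eq_or_ne v w with rfl | hvw
    · exact hw
    · intro hvS
      have htop : ∀ᶠ u in 𝓝[≠] v, F u = 0 := (hF v).order_eq_top_iff.mp hvS
      have hT : U ∩ {w}ᶜ ∈ 𝓝[≠] v :=
        nhdsWithin_le_nhds ((hUo.inter isOpen_compl_singleton).mem_nhds ⟨hv, hvw⟩)
      obtain ⟨u, hu0, huU⟩ := (htop.and (eventually_of_mem hT (fun u hu => hu))).exists
      obtain ⟨hurep, hugne⟩ := hU huU
      have huw : u ≠ w := huU.2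
      have : (u - w) ^ m * g u ≠ 0 :=
        mul_ne_zero (zpow_ne_zero m (sub_ne_zero.mpr huw)) hugne
      rw [← hurep] at this
      exact this hu0
  have : S = Set.univ := IsClopen.eq_univ ⟨hclosed, hopen⟩ ⟨z₀, h⟩
  have : z ∈ S := this ▸ Set.mem_univ z
  exact this



lemma mero_pow' {f : ℂ → ℂ} {x : ℂ} (hf : MeromorphicAt f x) (n : ℕ) :
    MeromorphicAt (fun w => f w ^ n) x := hf.pow n

lemma mainEq_symm {f g α : ℂ → ℂ} {n k : ℕ} (h : MainEq f g α n k) :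
    MainEq g f α n k := fun z hgz hfz => by rw [mul_comm]; exact h z hfz hgz

lemma contra_zero {f g α : ℂ → ℂ} {n k : ℕ} (hf : Mero f) (hg : Mero g)
    (hα : NonzeroMero α) (heq : MainEq f g α n k)
    (h0 : ∀ z : ℂ, ∀ᶠ w in 𝓝[≠] z,
      iteratedDeriv k (fun u => f u ^ n) w * iteratedDeriv k (fun u => g u ^ n) w = 0) :
    False := by
  obtain ⟨hαm, z, hzα, hz0⟩ := hα
  have h1 : ∀ᶠ w in 𝓝[≠] z, α w = 0 := by
    filter_upwards [(hf z).eventually_analyticAt, (hg z).eventually_analyticAt, h0 z]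
      with w hfw hgw hw
    have h2 : α w ^ 2 = 0 := by rw [← heq w hfw hgw]; exact hw
    exact (pow_eq_zero_iff (two_ne_zero)).mp h2
  have t1 : Tendsto α (𝓝[≠] z) (𝓝 (α z)) := hzα.continuousAt.continuousWithinAt
  have t2 : Tendsto α (𝓝[≠] z) (𝓝 0) :=
    Tendsto.congr' (EventuallyEq.symm h1) tendsto_const_nhds
  exact hz0 (tendsto_nhds_unique t1 t2)

lemma no_top_Df {f g α : ℂ → ℂ} {n k : ℕ} (hf : Mero f) (hg : Mero g)
    (hα : NonzeroMero α) (heq : MainEq f g α n k) (z : ℂ) :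
    (mero_iteratedDeriv (mero_pow' (hf z) n) k).order ≠ ⊤ := by
  intro htop
  have hDf : ∀ w : ℂ, MeromorphicAt (iteratedDeriv k (fun u => f u ^ n)) w :=
    fun w => mero_iteratedDeriv (mero_pow' (hf w) n) k
  have hall := order_top_global hDf (z₀ := z) htop
  apply contra_zero hf hg hα heq
  intro w
  filter_upwards [(hDf w).order_eq_top_iff.mp (hall w)] with u hu
  rw [hu, zero_mul]

lemma no_top_f {f g α : ℂ → ℂ} {n k : ℕ} (hn : 0 < n) (hf : Mero f) (hg : Mero g)
    (hα : NonzeroMero α) (heq : MainEq f g α n k) (z : ℂ) :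
    (hf z).order ≠ ⊤ := by
  intro htop
  have hall := order_top_global hf (z₀ := z) htop
  apply no_top_Df hf hg hα heq z
  have h1 : (mero_pow' (hf z) n).order = ⊤ := by
    rw [MeromorphicAt.order_eq_top_iff]
    filter_upwards [(hf z).order_eq_top_iff.mp (hall z)] with w hw
    rw [hw]; exact zero_pow hn.ne'
  exact order_top_iteratedDeriv (mero_pow' (hf z) n) h1 k _

lemma main_zero {f g α : ℂ → ℂ} {k n : ℕ} (hk : 0 < k) (hn : k < n)
    (hf : Mero f) (hg : Mero g) (hα : NonzeroMero α) (hcp : CommonPoles f g)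
    (heq : MainEq f g α n k) : ZeroMapsTo f α := by
  intro z hz
  have hαm : Mero α := hα.1
  have hdivf : div f z = (hf z).order.untopD 0 := dif_pos (hf z)
  have hdivg : div g z = (hg z).order.untopD 0 := dif_pos (hg z)
  have hdivα : div α z = (hαm z).order.untopD 0 := dif_pos (hαm z)
  have hn0 : 0 < n := lt_trans hk hn
  obtain ⟨a, ha⟩ := WithTop.ne_top_iff_exists.mp (no_top_f hn0 hf hg hα heq z)
  have hfa : (hf z).order = (a : ℤ) := ha.symm
  have hza : div f z = a := by rw [hdivf, hfa, WithTop.untopD_coe]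
  have hapos : 0 < a := by rwa [hza] at hz
  obtain ⟨b, hb⟩ := WithTop.ne_top_iff_exists.mp
    (no_top_f hn0 hg hf hα (mainEq_symm heq) z)
  have hgb : (hg z).order = (b : ℤ) := hb.symm
  have hzb : div g z = b := by rw [hdivg, hgb, WithTop.untopD_coe]
  have hbnonneg : 0 ≤ b := by
    have hnpf : ¬ IsPole f z := by
      show ¬ div f z < 0
      omega
    have hnpg : ¬ IsPole g z := fun hp => hnpf ((hcp z).mpr hp)
    have h4 : ¬ div g z < 0 := hnpg
    omega
  set F := fun u : ℂ => f u ^ n with hF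
  set G := fun u : ℂ => g u ^ n with hG
  have hFm : MeromorphicAt F z := mero_pow' (hf z) n
  have hGm : MeromorphicAt G z := mero_pow' (hg z) n
  have hFo : hFm.order = (a * n : ℤ) := order_pow_coe (hf z) n hfa hFm
  have hGo : hGm.order = (b * n : ℤ) := order_pow_coe (hg z) n hgb hGm
  have hDfm : MeromorphicAt (iteratedDeriv k F) z := mero_iteratedDeriv hFm k
  have hDgm : MeromorphicAt (iteratedDeriv k G) z := mero_iteratedDeriv hGm k
  have hkint : (k:ℤ) < n := by exact_mod_cast hn
  have hkpos : (1:ℤ) ≤ k := by exact_mod_cast hk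
  have hDfo : hDfm.order = (a * n - k : ℤ) := by
    apply order_iteratedDeriv hFm hFo k _ hDfm
    intro j hj
    have h1 : (j:ℤ) < k := by exact_mod_cast hj
    have h3 : (n:ℤ) ≤ a * n := le_mul_of_one_le_left (by positivity) (by omega)
    intro hcon
    omega
  have hDgtop : hDgm.order ≠ ⊤ := no_top_Df hg hf hα (mainEq_symm heq) z
  have hDgnn : 0 ≤ hDgm.order := by
    apply order_nonneg_iteratedDeriv hGm _ k hDgm
    rw [hGo]
    have : (0:ℤ) ≤ b * n := mul_nonneg hbnonneg (by positivity)
    exact_mod_cast this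
  obtain ⟨s, hs⟩ := WithTop.ne_top_iff_exists.mp hDgtop
  have hDgo : hDgm.order = (s : ℤ) := hs.symm
  have hsnn : (0:ℤ) ≤ s := by
    rw [hDgo] at hDgnn; exact_mod_cast hDgnn
  have hprod : MeromorphicAt (fun w => iteratedDeriv k F w * iteratedDeriv k G w) z :=
    hDfm.mul hDgm
  have hα2 : MeromorphicAt (fun w => α w ^ 2) z := mero_pow' (hαm z) 2
  have hEV : (fun w => α w ^ 2) =ᶠ[𝓝[≠] z]
      (fun w => iteratedDeriv k F w * iteratedDeriv k G w) := by
    filter_upwards [(hf z).eventually_analyticAt, (hg z).eventually_analyticAt]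
      with w h1 h2
    exact (heq w h1 h2).symm
  have hprodo : hprod.order = ((a * n - k) + s : ℤ) :=
    order_mul_coe hDfm hDgm hDfo hDgo hprod
  have hα2o : hα2.order = ((a * n - k) + s : ℤ) := by
    rw [order_congr' hα2 hprod hEV, hprodo]
  have hαtop : (hαm z).order ≠ ⊤ := by
    intro htop
    have hT : hα2.order = ⊤ := by
      rw [hα2.order_eq_top_iff]
      filter_upwards [(hαm z).order_eq_top_iff.mp htop] with w hw
      rw [hw]; norm_num
    rw [hα2o] at hT
    exact WithTop.coe_ne_top hT
  obtain ⟨c, hc⟩ := WithTop.ne_top_iff_exists.mp hαtop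
  have hαo : (hαm z).order = (c : ℤ) := hc.symm
  have h2c : hα2.order = (c * 2 : ℤ) := order_pow_coe (hαm z) 2 hαo hα2
  have hkey : (c * 2 : ℤ) = (a * n - k) + s := by
    have h5 := h2c.symm.trans hα2o
    exact_mod_cast h5
  have hzc : div α z = c := by rw [hdivα, hαo, WithTop.untopD_coe]
  rw [hza, hzc]
  nlinarith [mul_nonneg (show (0:ℤ) ≤ a - 1 by omega) (show (0:ℤ) ≤ (n:ℤ) - 2 by omega)]

lemma main_pole {f g α : ℂ → ℂ} {k n : ℕ} (hk : 0 < k) (hn : k < n)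
    (hf : Mero f) (hg : Mero g) (hα : NonzeroMero α) (hcp : CommonPoles f g)
    (heq : MainEq f g α n k) : PoleMapsTo f α := by
  intro z hz
  have hαm : Mero α := hα.1
  have hdivf : div f z = (hf z).order.untopD 0 := dif_pos (hf z)
  have hdivg : div g z = (hg z).order.untopD 0 := dif_pos (hg z)
  have hdivα : div α z = (hαm z).order.untopD 0 := dif_pos (hαm z)
  have hn0 : 0 < n := lt_trans hk hn
  obtain ⟨a, ha⟩ := WithTop.ne_top_iff_exists.mp (no_top_f hn0 hf hg hα heq z)
  have hfa : (hf z).order = (a : ℤ) := ha.symm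
  have hza : div f z = a := by rw [hdivf, hfa, WithTop.untopD_coe]
  have haneg : a < 0 := by rwa [hza] at hz
  obtain ⟨b, hb⟩ := WithTop.ne_top_iff_exists.mp
    (no_top_f hn0 hg hf hα (mainEq_symm heq) z)
  have hgb : (hg z).order = (b : ℤ) := hb.symm
  have hzb : div g z = b := by rw [hdivg, hgb, WithTop.untopD_coe]
  have hbneg : b < 0 := by
    have hpg : IsPole g z := (hcp z).mp hz
    have h4 : div g z < 0 := hpg
    omega
  set F := fun u : ℂ => f u ^ n with hF
  set G := fun u : ℂ => g u ^ n with hG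
  have hFm : MeromorphicAt F z := mero_pow' (hf z) n
  have hGm : MeromorphicAt G z := mero_pow' (hg z) n
  have hFo : hFm.order = (a * n : ℤ) := order_pow_coe (hf z) n hfa hFm
  have hGo : hGm.order = (b * n : ℤ) := order_pow_coe (hg z) n hgb hGm
  have hDfm : MeromorphicAt (iteratedDeriv k F) z := mero_iteratedDeriv hFm k
  have hDgm : MeromorphicAt (iteratedDeriv k G) z := mero_iteratedDeriv hGm k
  have hkint : (k:ℤ) < n := by exact_mod_cast hn
  have hkpos : (1:ℤ) ≤ k := by exact_mod_cast hk
  have hDfo : hDfm.order = (a * n - k : ℤ) := by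
    apply order_iteratedDeriv hFm hFo k _ hDfm
    intro j hj
    have h1 : a * n < 0 := by
      have := mul_pos (show (0:ℤ) < -a by omega) (show (0:ℤ) < (n:ℤ) by exact_mod_cast hn0)
      nlinarith
    intro hcon
    have : (0:ℤ) ≤ j := by positivity
    omega
  have hDgo : hDgm.order = (b * n - k : ℤ) := by
    apply order_iteratedDeriv hGm hGo k _ hDgm
    intro j hj
    have h1 : b * n < 0 := by
      have := mul_pos (show (0:ℤ) < -b by omega) (show (0:ℤ) < (n:ℤ) by exact_mod_cast hn0)
      nlinarith
    intro hcon
    have : (0:ℤ) ≤ j := by positivity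
    omega
  have hprod : MeromorphicAt (fun w => iteratedDeriv k F w * iteratedDeriv k G w) z :=
    hDfm.mul hDgm
  have hα2 : MeromorphicAt (fun w => α w ^ 2) z := mero_pow' (hαm z) 2
  have hEV : (fun w => α w ^ 2) =ᶠ[𝓝[≠] z]
      (fun w => iteratedDeriv k F w * iteratedDeriv k G w) := by
    filter_upwards [(hf z).eventually_analyticAt, (hg z).eventually_analyticAt]
      with w h1 h2
    exact (heq w h1 h2).symm
  have hprodo : hprod.order = ((a * n - k) + (b * n - k) : ℤ) :=
    order_mul_coe hDfm hDgm hDfo hDgo hprod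
  have hα2o : hα2.order = ((a * n - k) + (b * n - k) : ℤ) := by
    rw [order_congr' hα2 hprod hEV, hprodo]
  have hαtop : (hαm z).order ≠ ⊤ := by
    intro htop
    have hT : hα2.order = ⊤ := by
      rw [hα2.order_eq_top_iff]
      filter_upwards [(hαm z).order_eq_top_iff.mp htop] with w hw
      rw [hw]; norm_num
    rw [hα2o] at hT
    exact WithTop.coe_ne_top hT
  obtain ⟨c, hc⟩ := WithTop.ne_top_iff_exists.mp hαtop
  have hαo : (hαm z).order = (c : ℤ) := hc.symm
  have h2c : hα2.order = (c * 2 : ℤ) := order_pow_coe (hαm z) 2 hαo hα2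
  have hkey : (c * 2 : ℤ) = (a * n - k) + (b * n - k) := by
    have h5 := h2c.symm.trans hα2o
    exact_mod_cast h5
  have hzc : div α z = c := by rw [hdivα, hαo, WithTop.untopD_coe]
  rw [hza, hzc]
  nlinarith [mul_nonneg (show (0:ℤ) ≤ -a by omega) (show (0:ℤ) ≤ (n:ℤ) - 2 by omega),
    mul_nonneg (show (0:ℤ) ≤ -b by omega) (show (0:ℤ) ≤ (n:ℤ) by positivity)]



/-- Zeros and poles of `f` and `g` map to zeros and poles of `α`, with at least the
same multiplicity, when `f` and `g` have common poles. -/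
theorem stmt6 (f g α : ℂ → ℂ) (k n : ℕ)
    (hk : 0 < k) (hn : k < n)
    (hf : Mero f) (hg : Mero g) (hfnc : Nonconst f) (hgnc : Nonconst g)
    (hα : NonzeroMero α)
    (hcp : CommonPoles f g)
    (heq : MainEq f g α n k) :
    ZeroMapsTo f α ∧ ZeroMapsTo g α ∧ PoleMapsTo f α ∧ PoleMapsTo g α := by
  have hcp' : CommonPoles g f := fun z => (hcp z).symm
  exact ⟨main_zero hk hn hf hg hα hcp heq,
    main_zero hk hn hg hf hα hcp' (mainEq_symm heq),
    main_pole hk hn hf hg hα hcp heq,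
    main_pole hk hn hg hf hα hcp' (mainEq_symm heq)⟩

end Nevanlinna
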